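/- Let L > 0, N ≥ 1 an integer, 0 < m < L/(2N), and set z_i = iL/N for i ∈ ℤ. Let A = {(0,z) : |z − z_i| > m for all i ∈ ℤ} be the axis minus the horizon segments, and let U = {(ρ,z) : ρ > 0} ∪ A. Let σ, ω be continuous on U and continuously differentiable on {ρ > 0}, L-periodic in z, and for every i ∈ ℤ satisfy σ(ρ, 2z_i − z) = σ(ρ, z) and ω(ρ, 2z_i − z) = −ω(ρ, z) (equidistant, identical, co-rotating black hole data). Set η = ρ²e^σ, P = (ρ/4)(σ_ρ² − σ_z²) + (ρ/(4η²))(ω_ρ² − ω_z²), Q = (ρ/2)(σ_ρσ_z + η^{−2}ω_ρω_z), and assume P and Q extend continuously to U with Q(0,z) = 0 for all (0,z) ∈ A. Let q : U → ℝ be continuous on U, continuously differentiable on {ρ > 0}, with ∂_ρ q = P and ∂_z q = Q there. Then q is constant on A; in particular, if q vanishes at one point of the axis set A then q vanishes on all of A, so the solution has no angle defects (struts) on any axis component. -/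

import Mathlib

/-- Partial derivative with respect to the first (ρ) variable. -/
noncomputable def pdr (f : ℝ × ℝ → ℝ) (p : ℝ × ℝ) : ℝ :=
  deriv (fun x => f (x, p.2)) p.1

/-- Partial derivative with respect to the second (z) variable. -/
noncomputable def pdz (f : ℝ × ℝ → ℝ) (p : ℝ × ℝ) : ℝ :=
  deriv (fun y => f (p.1, y)) p.2


open Filter Set Topology

private lemma halfplane_open' : IsOpen {p : ℝ × ℝ | 0 < p.1} :=
  isOpen_lt continuous_const continuous_fst

private lemma slice_hasDerivAt' {q : ℝ × ℝ → ℝ}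
    (hq : ContDiffOn ℝ 1 q {p : ℝ × ℝ | 0 < p.1}) {ρ : ℝ} (hρ : 0 < ρ) (z : ℝ) :
    HasDerivAt (fun y => q (ρ, y)) (pdz q (ρ, z)) z := by
  have hmem : {p : ℝ × ℝ | 0 < p.1} ∈ 𝓝 ((ρ, z) : ℝ × ℝ) :=
    halfplane_open'.mem_nhds hρ
  have hd : DifferentiableAt ℝ q (ρ, z) :=
    (hq.differentiableOn one_ne_zero).differentiableAt hmem
  have hline : HasDerivAt (fun y : ℝ => ((ρ : ℝ), y)) ((0 : ℝ), (1 : ℝ)) z :=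
    (hasDerivAt_const z ρ).prodMk (hasDerivAt_id z)
  have h := hd.hasFDerivAt.comp_hasDerivAt z hline
  have he : pdz q (ρ, z) = fderiv ℝ q (ρ, z) (0, 1) := by
    exact h.deriv
  rw [he]; exact h

private lemma deriv_reflect_even' {f : ℝ → ℝ} {c : ℝ} (h : ∀ y, f (2*c - y) = f y) (z : ℝ) :
    deriv f (2*c - z) = - deriv f z := by
  have h1 : deriv (fun y => f (2*c - y)) z = - deriv f (2*c - z) :=
    deriv_comp_const_sub f (2*c) z
  have h2 : (fun y => f (2*c - y)) = f := funext h
  rw [h2] at h1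
  linarith

private lemma deriv_reflect_odd' {f : ℝ → ℝ} {c : ℝ} (h : ∀ y, f (2*c - y) = - f y) (z : ℝ) :
    deriv f (2*c - z) = deriv f z := by
  have h1 : deriv (fun y => f (2*c - y)) z = - deriv f (2*c - z) :=
    deriv_comp_const_sub f (2*c) z
  have h2 : (fun y => f (2*c - y)) = fun y => - f y := funext h
  rw [h2, deriv.fun_neg] at h1
  linarith

/-- for periodic equidistant identical co-rotating data (σ even and ω
odd about each horizon center z_i = iL/N), the metric function q is constant on
the axis set A; in particular if q vanishes at one point of A it vanishes on all
of A, so there are no struts on any axis component. -/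
theorem q_constant_on_axis_corotating
    (L : ℝ) (hL : 0 < L) (N : ℕ) (hN : 1 ≤ N) (m : ℝ)
    (hm : 0 < m) (hmL : m < L / (2 * N))
    (A : Set (ℝ × ℝ))
    (hA : A = {p : ℝ × ℝ | p.1 = 0 ∧ ∀ i : ℤ, m < |p.2 - (i : ℝ) * L / N|})
    (U : Set (ℝ × ℝ))
    (hUdef : U = {p : ℝ × ℝ | 0 < p.1} ∪ A)
    (σ ω : ℝ × ℝ → ℝ)
    (hσcont : ContinuousOn σ U) (hωcont : ContinuousOn ω U)
    (hσC1 : ContDiffOn ℝ 1 σ {p : ℝ × ℝ | 0 < p.1})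
    (hωC1 : ContDiffOn ℝ 1 ω {p : ℝ × ℝ | 0 < p.1})
    (hσper : ∀ p ∈ U, σ (p.1, p.2 + L) = σ p)
    (hωper : ∀ p ∈ U, ω (p.1, p.2 + L) = ω p)
    (hσsym : ∀ i : ℤ, ∀ p ∈ U, σ (p.1, 2 * ((i : ℝ) * L / N) - p.2) = σ p)
    (hωsym : ∀ i : ℤ, ∀ p ∈ U, ω (p.1, 2 * ((i : ℝ) * L / N) - p.2) = - ω p)
    (η P Q : ℝ × ℝ → ℝ)
    (hη : ∀ p, η p = p.1 ^ 2 * Real.exp (σ p))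
    (hP : ∀ p : ℝ × ℝ, 0 < p.1 →
      P p = p.1 / 4 * ((pdr σ p) ^ 2 - (pdz σ p) ^ 2)
        + p.1 / (4 * (η p) ^ 2) * ((pdr ω p) ^ 2 - (pdz ω p) ^ 2))
    (hQ : ∀ p : ℝ × ℝ, 0 < p.1 →
      Q p = p.1 / 2 * (pdr σ p * pdz σ p + pdr ω p * pdz ω p / (η p) ^ 2))
    (hPcont : ContinuousOn P U) (hQcont : ContinuousOn Q U)
    (hQaxis : ∀ p ∈ A, Q p = 0)
    (q : ℝ × ℝ → ℝ)
    (hqcont : ContinuousOn q U)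
    (hqC1 : ContDiffOn ℝ 1 q {p : ℝ × ℝ | 0 < p.1})
    (hqr : ∀ p : ℝ × ℝ, 0 < p.1 → pdr q p = P p)
    (hqz : ∀ p : ℝ × ℝ, 0 < p.1 → pdz q p = Q p) :
    (∀ p ∈ A, ∀ p' ∈ A, q p = q p')
      ∧ ((∃ p ∈ A, q p = 0) → ∀ p ∈ A, q p = 0) := by
  have hN0 : (0 : ℝ) < (N : ℝ) := by exact_mod_cast Nat.lt_of_lt_of_le Nat.zero_lt_one hN
  set d : ℝ := L / N with hd_def
  have hd : 0 < d := div_pos hL hN0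
  have hmd : m < d / 2 := by
    have h : L / (2 * N) = d / 2 := by rw [hd_def, div_div, mul_comm]
    linarith [h ▸ hmL]
  have hcd : ∀ i : ℤ, (i : ℝ) * L / N = (i : ℝ) * d := fun i => mul_div_assoc _ _ _
  have hHPU : {p : ℝ × ℝ | 0 < p.1} ⊆ U := by rw [hUdef]; exact subset_union_left
  have hAU : A ⊆ U := by rw [hUdef]; exact subset_union_right
  have hUmem : ∀ {ρ z : ℝ}, 0 < ρ → ((ρ, z) : ℝ × ℝ) ∈ U := fun {ρ z} hρ => hHPU hρ
  -- Q is antisymmetric with respect to each reflection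
  have Qas : ∀ (j : ℤ) {ρ : ℝ}, 0 < ρ → ∀ z : ℝ,
      Q (ρ, 2 * ((j : ℝ) * L / N) - z) = - Q (ρ, z) := by
    intro j ρ hρ z
    set c : ℝ := (j : ℝ) * L / N with hc
    have hσz : ∀ y : ℝ, σ (ρ, 2 * c - y) = σ (ρ, y) := fun y => hσsym j (ρ, y) (hUmem hρ)
    have hωz : ∀ y : ℝ, ω (ρ, 2 * c - y) = - ω (ρ, y) := fun y => hωsym j (ρ, y) (hUmem hρ)
    have e1 : pdz σ (ρ, 2 * c - z) = - pdz σ (ρ, z) := by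
      simpa [pdz] using deriv_reflect_even' (f := fun y => σ (ρ, y)) (c := c) hσz z
    have e2 : pdz ω (ρ, 2 * c - z) = pdz ω (ρ, z) := by
      simpa [pdz] using deriv_reflect_odd' (f := fun y => ω (ρ, y)) (c := c) hωz z
    have e3 : pdr σ (ρ, 2 * c - z) = pdr σ (ρ, z) := by
      have hev : (fun x => σ (x, 2 * c - z)) =ᶠ[𝓝 ρ] (fun x => σ (x, z)) := by
        filter_upwards [Ioi_mem_nhds hρ] with x hx
        exact hσsym j (x, z) (hUmem hx)
      simpa [pdr] using hev.deriv_eq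
    have e4 : pdr ω (ρ, 2 * c - z) = - pdr ω (ρ, z) := by
      have hev : (fun x => ω (x, 2 * c - z)) =ᶠ[𝓝 ρ] (fun x => - ω (x, z)) := by
        filter_upwards [Ioi_mem_nhds hρ] with x hx
        exact hωsym j (x, z) (hUmem hx)
      have := hev.deriv_eq
      simpa [pdr, deriv.neg] using this
    have e5 : η (ρ, 2 * c - z) = η (ρ, z) := by
      rw [hη, hη]
      simp only
      rw [hσz z]
    rw [hQ (ρ, 2 * c - z) hρ, hQ (ρ, z) hρ]
    simp only
    rw [e1, e2, e3, e4, e5]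
    ring
  -- reflection symmetry of q on the open half-plane
  have refl_half : ∀ (j : ℤ) {ρ : ℝ}, 0 < ρ → ∀ z : ℝ,
      q (ρ, 2 * ((j : ℝ) * L / N) - z) = q (ρ, z) := by
    intro j ρ hρ z
    set c : ℝ := (j : ℝ) * L / N with hc
    have hg : ∀ y : ℝ, HasDerivAt (fun w => q (ρ, 2 * c - w) - q (ρ, w)) 0 y := by
      intro y
      have h1 : HasDerivAt (fun w => q (ρ, w)) (pdz q (ρ, y)) y := slice_hasDerivAt' hqC1 hρ y
      have h2 : HasDerivAt (fun w : ℝ => 2 * c - w) (-1) y := by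
        simpa using (hasDerivAt_id' y).const_sub (2 * c)
      have h3 : HasDerivAt (fun w : ℝ => q (ρ, 2 * c - w)) (pdz q (ρ, 2 * c - y) * (-1)) y :=
        (slice_hasDerivAt' hqC1 hρ (2 * c - y)).comp y h2
      have h4 := h3.sub h1
      have h5 : pdz q (ρ, 2 * c - y) * (-1) - pdz q (ρ, y) = 0 := by
        rw [hqz (ρ, 2 * c - y) hρ, hqz (ρ, y) hρ, Qas j hρ y]; ring
      rwa [h5] at h4
    have hconst := is_const_of_deriv_eq_zero (f := fun w => q (ρ, 2 * c - w) - q (ρ, w))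
      (fun y => (hg y).differentiableAt) (fun y => (hg y).deriv) z c
    have h2cc : 2 * c - c = c := by ring
    rw [h2cc] at hconst
    linarith [hconst]
  -- limits onto the axis
  have tend : ∀ (f : ℝ × ℝ → ℝ), ContinuousOn f U → ∀ z : ℝ, ((0 : ℝ), z) ∈ U →
      Tendsto (fun ρ : ℝ => f (ρ, z)) (𝓝[>] (0 : ℝ)) (𝓝 (f (0, z))) := by
    intro f hf z hz
    have h1 : ContinuousWithinAt f U (0, z) := hf _ hz
    have h2 : Tendsto (fun ρ : ℝ => ((ρ, z) : ℝ × ℝ)) (𝓝[>] (0 : ℝ)) (𝓝[U] ((0 : ℝ), z)) := by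
      apply tendsto_nhdsWithin_of_tendsto_nhds_of_eventually_within
      · have hcont : Continuous (fun ρ : ℝ => ((ρ, z) : ℝ × ℝ)) :=
          continuous_id.prodMk continuous_const
        simpa using (hcont.tendsto 0).mono_left nhdsWithin_le_nhds
      · filter_upwards [self_mem_nhdsWithin] with ρ hρ
        exact hUmem hρ
    exact h1.tendsto.comp h2
  -- reflection symmetry of q on the axis
  have reflA : ∀ (j : ℤ) (z : ℝ), ((0 : ℝ), z) ∈ U →
      ((0 : ℝ), 2 * ((j : ℝ) * L / N) - z) ∈ U →
      q (0, 2 * ((j : ℝ) * L / N) - z) = q (0, z) := by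
    intro j z hz hz'
    have t1 := tend q hqcont _ hz'
    have t2 := tend q hqcont _ hz
    have heq : (fun ρ : ℝ => q (ρ, 2 * ((j : ℝ) * L / N) - z)) =ᶠ[𝓝[>] (0 : ℝ)]
        (fun ρ : ℝ => q (ρ, z)) := by
      filter_upwards [self_mem_nhdsWithin] with ρ hρ
      exact refl_half j hρ z
    exact tendsto_nhds_unique (t1.congr' heq) t2
  -- constancy of q along segments of the axis
  have AuxE : ∀ a b : ℝ, a ≤ b → (∀ t ∈ Set.Icc a b, ((0 : ℝ), t) ∈ A) →
      q (0, a) = q (0, b) := by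
    intro a b hab hsub
    have hUsub : ∀ t ∈ Set.Icc a b, ((0 : ℝ), t) ∈ U := fun t ht => hAU (hsub t ht)
    have hQat : ∀ {ρ t : ℝ}, 0 < ρ → ContinuousAt Q (ρ, t) := by
      intro ρ t hρ
      exact hQcont.continuousAt (mem_nhds_iff.2 ⟨_, hHPU, halfplane_open', hρ⟩)
    have hQsl : ∀ {ρ : ℝ}, 0 < ρ → Continuous (fun t : ℝ => Q (ρ, t)) := by
      intro ρ hρ
      rw [continuous_iff_continuousAt]
      intro t
      exact (hQat hρ).comp ((continuous_const.prodMk continuous_id).continuousAt)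
    have key1 : ∀ ρ : ℝ, 0 < ρ → q (ρ, b) - q (ρ, a) = ∫ t in a..b, Q (ρ, t) := by
      intro ρ hρ
      have hderiv : ∀ t ∈ Set.uIcc a b, HasDerivAt (fun y => q (ρ, y)) (Q (ρ, t)) t := by
        intro t _
        have h := slice_hasDerivAt' hqC1 hρ t
        rwa [hqz (ρ, t) hρ] at h
      have hint : IntervalIntegrable (fun t => Q (ρ, t)) MeasureTheory.volume a b :=
        (hQsl hρ).intervalIntegrable a b
      have := intervalIntegral.integral_eq_sub_of_hasDerivAt hderiv hint
      linarith [this]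
    have hKU : Set.Icc (0 : ℝ) 1 ×ˢ Set.Icc a b ⊆ U := by
      rintro ⟨x, t⟩ ⟨hx, ht⟩
      rcases lt_or_eq_of_le hx.1 with h0 | h0
      · exact hUmem h0
      · subst h0; exact hUsub t ht
    obtain ⟨C, hC⟩ := (isCompact_Icc.prod isCompact_Icc).exists_bound_of_continuousOn
      (hQcont.mono hKU)
    have key2 : Tendsto (fun ρ : ℝ => ∫ t in a..b, Q (ρ, t)) (𝓝[>] (0 : ℝ))
        (𝓝 (∫ t in a..b, Q (0, t))) := by
      have := intervalIntegral.continuousWithinAt_of_dominated_interval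
        (μ := MeasureTheory.volume) (F := fun ρ t => Q (ρ, t)) (x₀ := (0 : ℝ))
        (s := Set.Ioi 0) (bound := fun _ => C) (a := a) (b := b) ?_ ?_ ?_ ?_
      · exact this
      · filter_upwards [self_mem_nhdsWithin] with ρ hρ
        exact (hQsl hρ).aestronglyMeasurable
      · filter_upwards [Ioo_mem_nhdsGT_of_mem (⟨le_refl 0, zero_lt_one⟩ : (0:ℝ) ∈ Set.Ico (0:ℝ) 1)] with ρ hρ
        apply MeasureTheory.ae_of_all
        intro t ht
        have ht' : t ∈ Set.Icc a b := by
          rw [Set.uIoc_of_le hab] at ht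
          exact Set.Ioc_subset_Icc_self ht
        exact hC (ρ, t) ⟨⟨hρ.1.le, hρ.2.le⟩, ht'⟩
      · exact intervalIntegrable_const
      · apply MeasureTheory.ae_of_all
        intro t ht
        have ht' : t ∈ Set.Icc a b := by
          rw [Set.uIoc_of_le hab] at ht
          exact Set.Ioc_subset_Icc_self ht
        exact tend Q hQcont t (hUsub t ht')
    have key3 : (∫ t in a..b, Q (0, t)) = 0 := by
      have : ∀ t ∈ Set.uIcc a b, Q (0, t) = (fun _ : ℝ => (0 : ℝ)) t := by
        intro t ht
        rw [Set.uIcc_of_le hab] at ht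
        exact hQaxis (0, t) (hsub t ht)
      rw [intervalIntegral.integral_congr this]
      simp
    have key4 : Tendsto (fun ρ : ℝ => q (ρ, b) - q (ρ, a)) (𝓝[>] (0 : ℝ))
        (𝓝 (q (0, b) - q (0, a))) :=
      (tend q hqcont b (hUsub b ⟨hab, le_refl b⟩)).sub (tend q hqcont a (hUsub a ⟨le_refl a, hab⟩))
    have heq : (fun ρ : ℝ => q (ρ, b) - q (ρ, a)) =ᶠ[𝓝[>] (0 : ℝ)]
        (fun ρ : ℝ => ∫ t in a..b, Q (ρ, t)) := by
      filter_upwards [self_mem_nhdsWithin] with ρ hρ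
      exact key1 ρ hρ
    have := tendsto_nhds_unique (key4.congr' heq) key2
    rw [key3] at this
    linarith
  -- midpoints
  set mid : ℤ → ℝ := fun j => (j : ℝ) * d + d / 2 with hmid
  have habs : ∀ k : ℤ, d / 2 ≤ |(k : ℝ) * d + d / 2| := by
    intro k
    rcases le_or_gt 0 (k : ℝ) with h | h
    · have h1 : 0 ≤ (k : ℝ) * d := mul_nonneg h hd.le
      rw [abs_of_nonneg (by linarith)]
      linarith
    · have hk : k ≤ -1 := by
        have : k < 0 := by exact_mod_cast h
        omega
      have hk1 : (k : ℝ) ≤ -1 := by exact_mod_cast hk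
      have h1 : (k : ℝ) * d ≤ -d := by nlinarith
      rw [abs_of_nonpos (by linarith)]
      linarith
  have mem_A_mid : ∀ j : ℤ, ((0 : ℝ), mid j) ∈ A := by
    intro j
    rw [hA]
    refine ⟨rfl, fun i => ?_⟩
    have : mid j - (i : ℝ) * L / N = ((j - i : ℤ) : ℝ) * d + d / 2 := by
      rw [hcd i, hmid]
      push_cast
      ring
    rw [this]
    exact lt_of_lt_of_le hmd (habs (j - i))
  -- within-component constancy
  have hmemA : ∀ (j : ℤ) (t : ℝ), (j : ℝ) * d + m < t → t < ((j : ℝ) + 1) * d - m →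
      ((0 : ℝ), t) ∈ A := by
    intro j t ht1 ht2
    rw [hA]
    refine ⟨rfl, fun i => ?_⟩
    rw [hcd i]
    rcases le_or_gt i j with hij | hij
    · have h1 : (i : ℝ) ≤ (j : ℝ) := by exact_mod_cast hij
      have h2 : (i : ℝ) * d ≤ (j : ℝ) * d := mul_le_mul_of_nonneg_right h1 hd.le
      have h3 : m < t - (i : ℝ) * d := by linarith
      exact lt_of_lt_of_le h3 (le_abs_self _)
    · have h1 : (j : ℝ) + 1 ≤ (i : ℝ) := by exact_mod_cast hij
      have h2 : ((j : ℝ) + 1) * d ≤ (i : ℝ) * d := mul_le_mul_of_nonneg_right h1 hd.le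
      have h3 : m < (i : ℝ) * d - t := by linarith
      calc m < (i : ℝ) * d - t := h3
        _ = -(t - (i : ℝ) * d) := by ring
        _ ≤ |t - (i : ℝ) * d| := neg_le_abs _
  have comp_const : ∀ (j : ℤ) (z : ℝ), (j : ℝ) * d + m < z → z < ((j : ℝ) + 1) * d - m →
      q (0, z) = q (0, mid j) := by
    intro j z h1 h2
    have hmid1 : (j : ℝ) * d + m < mid j := by rw [hmid]; simp only; linarith
    have hmid2 : mid j < ((j : ℝ) + 1) * d - m := by rw [hmid]; simp only; nlinarith
    rcases le_total z (mid j) with h | h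
    · exact AuxE z (mid j) h (fun t ht => hmemA j t (by linarith [ht.1]) (by linarith [ht.2]))
    · exact (AuxE (mid j) z h (fun t ht => hmemA j t (by linarith [ht.1]) (by linarith [ht.2]))).symm
  -- all midpoint values agree
  have step : ∀ j : ℤ, q (0, mid (j + 1)) = q (0, mid j) := by
    intro j
    have harith : 2 * (((j + 1 : ℤ) : ℝ) * L / N) - mid j = mid (j + 1) := by
      rw [hcd (j + 1), hmid]
      push_cast
      ring
    have := reflA (j + 1) (mid j) (hAU (mem_A_mid j))
      (by rw [harith]; exact hAU (mem_A_mid (j + 1)))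
    rw [harith] at this
    exact this
  have hmid_eq : ∀ j : ℤ, q (0, mid j) = q (0, mid 0) := by
    intro j
    induction j using Int.induction_on with
    | zero => rfl
    | succ k ih => rw [step k]; exact ih
    | pred k ih =>
      have := step (-(k : ℤ) - 1)
      have h2 : (-(k : ℤ) - 1) + 1 = -(k : ℤ) := by ring
      rw [h2] at this
      rw [← this]
      exact ih
  -- locating an axis point within a component
  have locate : ∀ z : ℝ, (∀ i : ℤ, m < |z - (i : ℝ) * L / N|) →
      ∃ j : ℤ, (j : ℝ) * d + m < z ∧ z < ((j : ℝ) + 1) * d - m := by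
    intro z hz
    refine ⟨⌊z / d⌋, ?_, ?_⟩
    · have h1 : (⌊z / d⌋ : ℝ) ≤ z / d := Int.floor_le _
      have h1' : (⌊z / d⌋ : ℝ) * d ≤ z := by
        rw [← le_div_iff₀ hd]; exact h1
      have ha := hz ⌊z / d⌋
      rw [hcd, abs_of_nonneg (by linarith)] at ha
      linarith
    · have h2 : z / d < (⌊z / d⌋ : ℝ) + 1 := Int.lt_floor_add_one _
      have h2' : z < ((⌊z / d⌋ : ℝ) + 1) * d := by
        rw [← div_lt_iff₀ hd] at *
        exact h2
      have hb := hz (⌊z / d⌋ + 1)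
      rw [hcd] at hb
      push_cast at hb
      rw [abs_of_nonpos (by linarith)] at hb
      linarith
  have main : ∀ p ∈ A, q p = q (0, mid 0) := by
    intro p hp
    have hp' := hp
    rw [hA] at hp'
    obtain ⟨hp1, hp2⟩ := hp'
    obtain ⟨j, hj1, hj2⟩ := locate p.2 hp2
    have h1 : q (0, p.2) = q (0, mid j) := comp_const j p.2 hj1 hj2
    have hpe : p = ((0 : ℝ), p.2) := by
      ext
      · exact hp1
      · rfl
    rw [hpe, h1, hmid_eq j]
  constructor
  · intro p hp p' hp'
    rw [main p hp, main p' hp']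
  · rintro ⟨p, hp, hq0⟩ p' hp'
    rw [main p' hp', ← main p hp, hq0]
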